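/- Let u be twice continuously differentiable on [X_{j-1}, X_{j+1}] and suppose u(X_{j±1}) = u(X_j) (the γ = 0 coupling condition). If u'' = λ u on the element with λ a constant and u not identically constant, and additionally u is C¹ across X_j, then λ ≤ -π²/h², where h = X_{j+1} - X_j = X_j - X_{j-1}. In particular the only eigenvalue of the element Laplacian with eigenvalue > -π²/h² under these conditions is λ = 0, attained by constant functions. -/

import Mathlib

open Real Set

/-- A function with zero derivative on an open interval is constant there. -/
lemma const_on_Ioo_aux {f : ℝ → ℝ} {a b : ℝ} (hf : ∀ x ∈ Ioo a b, HasDerivAt f 0 x)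
    {x y : ℝ} (hx : x ∈ Ioo a b) (hy : y ∈ Ioo a b) : f x = f y := by
  refine (convex_Ioo a b).is_const_of_fderivWithin_eq_zero
    (fun z hz => (hf z hz).differentiableAt.differentiableWithinAt) (fun z hz => ?_) hx hy
  rw [fderivWithin_eq_fderiv (isOpen_Ioo.uniqueDiffWithinAt hz) (hf z hz).differentiableAt]
  ext t
  simp [(hf z hz).deriv]

/-- Representation of a solution of `u'' = λ u` on an element in terms of a
fundamental system `c, s` with `c 0 = 1, c' 0 = 0, s 0 = 0, s' 0 = 1`. -/
lemma ode_repr (h Xj lam : ℝ) (hh : 0 < h) (u c s c' s' : ℝ → ℝ)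
    (hreg : ContDiffOn ℝ 2 u (Icc (Xj - h) (Xj + h)))
    (heig : ∀ x ∈ Icc (Xj - h) (Xj + h), deriv (deriv u) x = lam * u x)
    (hc : ∀ x, HasDerivAt c (c' x) x) (hc' : ∀ x, HasDerivAt c' (lam * c x) x)
    (hs : ∀ x, HasDerivAt s (s' x) x) (hs' : ∀ x, HasDerivAt s' (lam * s x) x)
    (hc0 : c 0 = 1) (hc'0 : c' 0 = 0) (hs0 : s 0 = 0) (hs'0 : s' 0 = 1) :
    ∀ x ∈ Icc (Xj - h) (Xj + h), u x = u Xj * c (x - Xj) + deriv u Xj * s (x - Xj) := by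
  set a := Xj - h with ha
  set b := Xj + h with hb
  have hab : a < b := by simp only [ha, hb]; linarith
  have hXj : Xj ∈ Ioo a b := by constructor <;> simp [ha, hb] <;> linarith
  have hsub : Ioo a b ⊆ Icc a b := Ioo_subset_Icc_self
  -- differentiability facts on the open interval
  have hu1 : ∀ x ∈ Ioo a b, HasDerivAt u (deriv u x) x := by
    intro x hx
    exact (((hreg.mono hsub).differentiableOn (by norm_num)).differentiableAt
      (isOpen_Ioo.mem_nhds hx)).hasDerivAt
  have hu2 : ∀ x ∈ Ioo a b, HasDerivAt (deriv u) (lam * u x) x := by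
    intro x hx
    have hd : ContDiffOn ℝ 1 (deriv u) (Ioo a b) :=
      (hreg.mono hsub).deriv_of_isOpen isOpen_Ioo (by norm_num)
    have := ((hd.differentiableOn one_ne_zero).differentiableAt
      (isOpen_Ioo.mem_nhds hx)).hasDerivAt
    rwa [heig x (hsub hx)] at this
  -- Wronskians
  have hW1 : ∀ x ∈ Ioo a b,
      HasDerivAt (fun x => deriv u x * c (x - Xj) - u x * c' (x - Xj)) 0 x := by
    intro x hx
    have h1 : HasDerivAt (fun x => c (x - Xj)) (c' (x - Xj)) x := by
      simpa [Function.comp_def] using (hc (x - Xj)).comp x ((hasDerivAt_id x).sub_const Xj)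
    have h2 : HasDerivAt (fun x => c' (x - Xj)) (lam * c (x - Xj)) x := by
      simpa [Function.comp_def] using (hc' (x - Xj)).comp x ((hasDerivAt_id x).sub_const Xj)
    have := ((hu2 x hx).mul h1).sub ((hu1 x hx).mul h2)
    exact this.congr_deriv (by ring)
  have hW2 : ∀ x ∈ Ioo a b,
      HasDerivAt (fun x => deriv u x * s (x - Xj) - u x * s' (x - Xj)) 0 x := by
    intro x hx
    have h1 : HasDerivAt (fun x => s (x - Xj)) (s' (x - Xj)) x := by
      simpa [Function.comp_def] using (hs (x - Xj)).comp x ((hasDerivAt_id x).sub_const Xj)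
    have h2 : HasDerivAt (fun x => s' (x - Xj)) (lam * s (x - Xj)) x := by
      simpa [Function.comp_def] using (hs' (x - Xj)).comp x ((hasDerivAt_id x).sub_const Xj)
    have := ((hu2 x hx).mul h1).sub ((hu1 x hx).mul h2)
    exact this.congr_deriv (by ring)
  -- Wronskian of the fundamental system is constant ≡ 1
  have hWr : ∀ y : ℝ, c y * s' y - s y * c' y = 1 := by
    intro y
    have hz : ∀ z : ℝ, HasDerivAt (fun y => c y * s' y - s y * c' y) 0 z := by
      intro z
      have := ((hc z).mul (hs' z)).sub ((hs z).mul (hc' z))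
      exact this.congr_deriv (by ring)
    have hconst : (fun y => c y * s' y - s y * c' y) y
        = (fun y => c y * s' y - s y * c' y) 0 :=
      is_const_of_deriv_eq_zero (fun z => (hz z).differentiableAt)
        (fun z => (hz z).deriv) y 0
    simpa [hc0, hc'0, hs0, hs'0] using hconst
  -- representation on the open interval
  have hrep : ∀ x ∈ Ioo a b, u x = u Xj * c (x - Xj) + deriv u Xj * s (x - Xj) := by
    intro x hx
    have e1 : deriv u x * c (x - Xj) - u x * c' (x - Xj) = deriv u Xj := by
      have := const_on_Ioo_aux hW1 hx hXj
      simpa [hc0, hc'0] using this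
    have e2 : deriv u x * s (x - Xj) - u x * s' (x - Xj) = -u Xj := by
      have := const_on_Ioo_aux hW2 hx hXj
      simpa [hs0, hs'0] using this
    have key : u x * (c (x - Xj) * s' (x - Xj) - s (x - Xj) * c' (x - Xj))
        = u Xj * c (x - Xj) + deriv u Xj * s (x - Xj) := by
      have : (deriv u x * c (x - Xj) - u x * c' (x - Xj)) * s (x - Xj)
          - (deriv u x * s (x - Xj) - u x * s' (x - Xj)) * c (x - Xj)
          = u x * (c (x - Xj) * s' (x - Xj) - s (x - Xj) * c' (x - Xj)) := by ring
      rw [← this, e1, e2]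
      ring
    rw [hWr (x - Xj), mul_one] at key
    exact key
  -- extend to the closed interval by continuity
  intro x hx
  have hxcl : x ∈ closure (Ioo a b) := by
    rwa [closure_Ioo hab.ne]
  have hne : (nhdsWithin x (Ioo a b)).NeBot := mem_closure_iff_nhdsWithin_neBot.mp hxcl
  have hcc : Continuous c := by
    have : Differentiable ℝ c := fun z => (hc z).differentiableAt
    exact this.continuous
  have hsc : Continuous s := by
    have : Differentiable ℝ s := fun z => (hs z).differentiableAt
    exact this.continuous
  have hF : Continuous fun x => u Xj * c (x - Xj) + deriv u Xj * s (x - Xj) := by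
    fun_prop
  have h1 : Filter.Tendsto u (nhdsWithin x (Ioo a b)) (nhds (u x)) :=
    (hreg.continuousOn x hx).mono hsub
  have h2 : Filter.Tendsto (fun x => u Xj * c (x - Xj) + deriv u Xj * s (x - Xj))
      (nhdsWithin x (Ioo a b))
      (nhds (u Xj * c (x - Xj) + deriv u Xj * s (x - Xj))) :=
    hF.continuousAt.continuousWithinAt
  have h3 : Filter.Tendsto u (nhdsWithin x (Ioo a b))
      (nhds (u Xj * c (x - Xj) + deriv u Xj * s (x - Xj))) :=
    h2.congr' (eventually_mem_nhdsWithin.mono fun z hz => (hrep z hz).symm)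
  exact tendsto_nhds_unique h1 h3

/-- Let `u` be twice continuously differentiable on `[X_j - h, X_j + h]` with
`u(X_j ± h) = u(X_j)` (the `γ = 0` coupling condition), `C¹` across `X_j`, and
suppose `u'' = λ u` on the element with `u` not identically constant. Then
`λ ≤ -π²/h²`. -/
theorem element_spectral_gap (h Xj lam : ℝ) (hh : 0 < h) (u : ℝ → ℝ)
    (hreg : ContDiffOn ℝ 2 u (Icc (Xj - h) (Xj + h)))
    (hC1 : ContinuousAt (deriv u) Xj)
    (hbc1 : u (Xj - h) = u Xj) (hbc2 : u (Xj + h) = u Xj)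
    (heig : ∀ x ∈ Icc (Xj - h) (Xj + h), deriv (deriv u) x = lam * u x)
    (hnonconst : ¬ ∀ x ∈ Icc (Xj - h) (Xj + h), u x = u Xj) :
    lam ≤ -(π ^ 2 / h ^ 2) := by
  by_contra hcon
  push_neg at hcon
  apply hnonconst
  rcases lt_trichotomy lam 0 with hneg | hzero | hpos
  · -- oscillatory case `lam < 0`
    set ω := Real.sqrt (-lam) with hωdef
    have hω0 : 0 < ω := Real.sqrt_pos.mpr (by linarith)
    have hω2 : ω ^ 2 = -lam := Real.sq_sqrt (by linarith)
    have hlameq : lam = -(ω ^ 2) := by linarith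
    have hc : ∀ y, HasDerivAt (fun y => Real.cos (ω * y)) (-(ω * Real.sin (ω * y))) y := by
      intro y
      have := (Real.hasDerivAt_cos (ω * y)).comp y ((hasDerivAt_id y).const_mul ω)
      exact this.congr_deriv (by ring)
    have hc' : ∀ y, HasDerivAt (fun y => -(ω * Real.sin (ω * y)))
        (lam * Real.cos (ω * y)) y := by
      intro y
      have := (((Real.hasDerivAt_sin (ω * y)).comp y
        ((hasDerivAt_id y).const_mul ω)).const_mul ω).neg
      exact this.congr_deriv (by rw [hlameq]; ring)
    have hs : ∀ y, HasDerivAt (fun y => ω⁻¹ * Real.sin (ω * y)) (Real.cos (ω * y)) y := by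
      intro y
      have := ((Real.hasDerivAt_sin (ω * y)).comp y
        ((hasDerivAt_id y).const_mul ω)).const_mul ω⁻¹
      exact this.congr_deriv (by field_simp)
    have hs' : ∀ y, HasDerivAt (fun y => Real.cos (ω * y))
        (lam * (ω⁻¹ * Real.sin (ω * y))) y := by
      intro y
      have := hc y
      convert this using 1
      rw [hlameq]
      field_simp
    have hrep := ode_repr h Xj lam hh u _ _ _ _ hreg heig hc hc' hs hs'
      (by simp) (by simp) (by simp) (by simp)
    have e1 := hrep (Xj - h) ⟨le_refl _, by linarith⟩
    have e2 := hrep (Xj + h) ⟨by linarith, le_refl _⟩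
    rw [hbc1] at e1
    rw [hbc2] at e2
    have hy1 : Xj - h - Xj = -h := by ring
    have hy2 : Xj + h - Xj = h := by ring
    rw [hy1] at e1
    rw [hy2] at e2
    rw [mul_neg, Real.cos_neg, Real.sin_neg] at e1
    -- `ω * h < π`
    have hπh : 0 < π / h := div_pos pi_pos hh
    have hωlt : ω < π / h := by
      have h2 : ω ^ 2 < (π / h) ^ 2 := by
        rw [hω2]
        rw [div_pow]
        linarith
      exact lt_of_pow_lt_pow_left₀ 2 hπh.le h2
    have hωh : ω * h < π := (lt_div_iff₀ hh).mp hωlt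
    have hsin : 0 < Real.sin (ω * h) := Real.sin_pos_of_pos_of_lt_pi (by positivity) hωh
    have hd : deriv u Xj = 0 := by
      have h5 : deriv u Xj * (ω⁻¹ * Real.sin (ω * h)) = 0 := by linarith
      have h6 : 0 < ω⁻¹ * Real.sin (ω * h) := by positivity
      rcases mul_eq_zero.mp h5 with h7 | h7
      · exact h7
      · exact absurd h7 h6.ne'
    have hcosne : Real.cos (ω * h) ≠ 1 := by
      intro hcos1
      have h8 : ω * h = 0 := (Real.cos_eq_one_iff_of_lt_of_lt
        (by nlinarith [Real.pi_pos]) (by nlinarith [Real.pi_pos])).mp hcos1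
      nlinarith
    have hu0 : u Xj = 0 := by
      rw [hd, zero_mul, add_zero] at e2
      rcases mul_eq_zero.mp (show u Xj * (Real.cos (ω * h) - 1) = 0 by linarith) with h9 | h9
      · exact h9
      · exact absurd (by linarith : Real.cos (ω * h) = 1) hcosne
    intro x hx
    rw [hrep x hx, hd, hu0]
    simp
  · -- `lam = 0`
    subst hzero
    have hrep := ode_repr h Xj 0 hh u (fun _ => (1 : ℝ)) (fun y => y) (fun _ => (0 : ℝ))
      (fun _ => (1 : ℝ)) hreg heig (fun y => hasDerivAt_const y 1)
      (fun y => by simpa using hasDerivAt_const y (0 : ℝ))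
      (fun y => hasDerivAt_id y)
      (fun y => by simpa using hasDerivAt_const y (1 : ℝ))
      rfl rfl rfl rfl
    have e1 : u (Xj - h) = u Xj * 1 + deriv u Xj * (Xj - h - Xj) :=
      hrep (Xj - h) ⟨le_refl _, by linarith⟩
    rw [hbc1] at e1
    have hd : deriv u Xj = 0 := by
      have : deriv u Xj * (Xj - h - Xj) = 0 := by linarith
      have h5 : deriv u Xj * h = 0 := by linarith [this]
      rcases mul_eq_zero.mp h5 with h7 | h7
      · exact h7
      · exact absurd h7 hh.ne'
    intro x hx
    have := hrep x hx
    rw [hd] at this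
    simpa using this
  · -- hyperbolic case `lam > 0`
    set ω := Real.sqrt lam with hωdef
    have hω0 : 0 < ω := Real.sqrt_pos.mpr hpos
    have hω2 : ω ^ 2 = lam := Real.sq_sqrt hpos.le
    have hc : ∀ y, HasDerivAt (fun y => Real.cosh (ω * y)) (ω * Real.sinh (ω * y)) y := by
      intro y
      have := (Real.hasDerivAt_cosh (ω * y)).comp y ((hasDerivAt_id y).const_mul ω)
      exact this.congr_deriv (by ring)
    have hc' : ∀ y, HasDerivAt (fun y => ω * Real.sinh (ω * y))
        (lam * Real.cosh (ω * y)) y := by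
      intro y
      have := ((Real.hasDerivAt_sinh (ω * y)).comp y
        ((hasDerivAt_id y).const_mul ω)).const_mul ω
      exact this.congr_deriv (by rw [← hω2]; ring)
    have hs : ∀ y, HasDerivAt (fun y => ω⁻¹ * Real.sinh (ω * y)) (Real.cosh (ω * y)) y := by
      intro y
      have := ((Real.hasDerivAt_sinh (ω * y)).comp y
        ((hasDerivAt_id y).const_mul ω)).const_mul ω⁻¹
      exact this.congr_deriv (by field_simp)
    have hs' : ∀ y, HasDerivAt (fun y => Real.cosh (ω * y))
        (lam * (ω⁻¹ * Real.sinh (ω * y))) y := by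
      intro y
      have := hc y
      convert this using 1
      rw [← hω2]
      field_simp
    have hrep := ode_repr h Xj lam hh u _ _ _ _ hreg heig hc hc' hs hs'
      (by simp) (by simp) (by simp) (by simp)
    have e1 := hrep (Xj - h) ⟨le_refl _, by linarith⟩
    have e2 := hrep (Xj + h) ⟨by linarith, le_refl _⟩
    rw [hbc1] at e1
    rw [hbc2] at e2
    have hy1 : Xj - h - Xj = -h := by ring
    have hy2 : Xj + h - Xj = h := by ring
    rw [hy1] at e1
    rw [hy2] at e2
    rw [mul_neg, Real.cosh_neg, Real.sinh_neg] at e1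
    have hsinh : 0 < Real.sinh (ω * h) := by
      rw [Real.sinh_pos_iff]
      positivity
    have hd : deriv u Xj = 0 := by
      have h5 : deriv u Xj * (ω⁻¹ * Real.sinh (ω * h)) = 0 := by linarith
      have h6 : 0 < ω⁻¹ * Real.sinh (ω * h) := by positivity
      rcases mul_eq_zero.mp h5 with h7 | h7
      · exact h7
      · exact absurd h7 h6.ne'
    have hcosh : 1 < Real.cosh (ω * h) := by
      rw [Real.one_lt_cosh]
      positivity
    have hu0 : u Xj = 0 := by
      rw [hd, zero_mul, add_zero] at e2
      rcases mul_eq_zero.mp (show u Xj * (Real.cosh (ω * h) - 1) = 0 by linarith)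
        with h9 | h9
      · exact h9
      · linarith
    intro x hx
    rw [hrep x hx, hd, hu0]
    simp
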